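/- Let m be a positive integer, a_1,…,a_m positive integers, b_1,…,b_m positive real numbers, and n a positive integer. Then the duplication relation holds: Σ over all sign vectors (s_1,…,s_m) ∈ {−1,+1}^m of S_{a_m,…,a_1}(s_m·b_m,…,s_1·b_1; 2n) equals 2^{m − (a_1+⋯+a_m)} · S_{a_m,…,a_1}(b_m^2,…,b_1^2; n). -/

import Mathlib

/-- The generalized harmonic sum (`S`-sum). -/
noncomputable def Ssum : List (ℕ × ℝ) → ℕ → ℝ
  | [], _ => 1
  | (a, x) :: p, n => ∑ i ∈ Finset.Icc 1 n, x ^ i / (i : ℝ) ^ a * Ssum p i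

lemma even_sum (f : ℕ → ℝ) (n : ℕ) (h : ∀ i, ¬ Even i → f i = 0) :
    ∑ i ∈ Finset.Icc 1 (2 * n), f i = ∑ j ∈ Finset.Icc 1 n, f (2 * j) := by
  rw [← Finset.sum_filter_of_ne (p := fun i => Even i) (by intro x _ hx; by_contra he; exact hx (h x he))]
  refine Finset.sum_nbij' (fun i => i / 2) (fun j => 2 * j) ?_ ?_ ?_ ?_ ?_
  · intro i hi
    simp only [Finset.mem_filter, Finset.mem_Icc] at hi ⊢
    obtain ⟨⟨h1, h2⟩, k, hk⟩ := hi
    omega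
  · intro j hj
    simp only [Finset.mem_filter, Finset.mem_Icc] at hj ⊢
    exact ⟨⟨by omega, by omega⟩, ⟨j, by ring⟩⟩
  · intro i hi
    simp only [Finset.mem_filter, Finset.mem_Icc] at hi
    obtain ⟨⟨h1, h2⟩, k, hk⟩ := hi
    omega
  · intro j hj; omega
  · intro i hi
    simp only [Finset.mem_filter, Finset.mem_Icc] at hi
    obtain ⟨⟨h1, h2⟩, k, hk⟩ := hi
    congr 1; omega

lemma aux_dup : ∀ (m : ℕ) (a : Fin m → ℕ) (b : Fin m → ℝ), (∀ i, 1 ≤ a i) → ∀ n : ℕ,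
    (∑ s : Fin m → Bool,
        Ssum (List.ofFn fun i => (a i, if s i then b i else -b i)) (2 * n)) =
      (2 : ℝ) ^ m / 2 ^ (∑ i, a i) * Ssum (List.ofFn fun i => (a i, b i ^ 2)) n := by
  intro m
  induction m with
  | zero =>
    intro a b ha n
    simp [Ssum, List.ofFn_zero]
  | succ m IH =>
    intro a b ha n
    have hofn : ∀ (s : Fin (m+1) → Bool),
        (List.ofFn fun i => (a i, if s i then b i else -b i)) =
          (a 0, if s 0 then b 0 else -b 0) ::
            (List.ofFn fun i : Fin m => (a i.succ, if s i.succ then b i.succ else -b i.succ)) := by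
      intro s; rw [List.ofFn_succ]
    -- sum over sign vectors = sum over (head, tail)
    rw [← Equiv.sum_comp (Fin.consEquiv (fun _ : Fin (m+1) => Bool))
      (fun s => Ssum (List.ofFn fun i => (a i, if s i then b i else -b i)) (2 * n))]
    rw [Fintype.sum_prod_type]
    simp only [Fin.consEquiv_apply, hofn, Fin.cons_zero, Fin.cons_succ, Ssum]
    -- swap: ∑ t ∑ s' ∑ i  →  ∑ i (∑ t x^i) * (∑ s' ...)
    rw [show ∀ P : Bool → (Fin m → Bool) → ℝ, (∑ t : Bool, ∑ s' : Fin m → Bool, P t s')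
        = (∑ s' : Fin m → Bool, P true s') + (∑ s' : Fin m → Bool, P false s') from
      fun P => by rw [Fintype.sum_bool]]
    simp only [Fin.consEquiv_apply, Fin.cons_zero, Fin.cons_succ, if_true,
      Bool.false_eq_true, if_false]
    set L : (Fin m → Bool) → List (ℕ × ℝ) :=
      fun s' => List.ofFn fun k : Fin m => (a k.succ, if s' k then b k.succ else -b k.succ)
      with hL
    set T : ℕ → ℝ := fun i => ∑ s' : Fin m → Bool, Ssum (L s') i with hT
    rw [← Finset.sum_add_distrib]
    have step1 : (∑ y : Fin m → Bool,
        ((∑ i ∈ Finset.Icc 1 (2 * n), b 0 ^ i / (i : ℝ) ^ a 0 * Ssum (L y) i) +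
          ∑ i ∈ Finset.Icc 1 (2 * n), (-b 0) ^ i / (i : ℝ) ^ a 0 * Ssum (L y) i)) =
        ∑ i ∈ Finset.Icc 1 (2 * n), (b 0 ^ i + (-b 0) ^ i) / (i : ℝ) ^ a 0 * T i := by
      simp only [← Finset.sum_add_distrib]
      rw [Finset.sum_comm]
      refine Finset.sum_congr rfl fun i _ => ?_
      rw [hT]
      dsimp only
      rw [Finset.mul_sum]
      refine Finset.sum_congr rfl fun y _ => ?_
      ring
    rw [step1]
    have hodd : ∀ i : ℕ, ¬ Even i →
        (b 0 ^ i + (-b 0) ^ i) / (i : ℝ) ^ a 0 * T i = 0 := by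
      intro i hi
      rw [(Nat.not_even_iff_odd.mp hi).neg_pow]
      simp
    rw [even_sum _ n hodd]
    have hIH := IH (fun k => a k.succ) (fun k => b k.succ) (fun k => ha k.succ)
    have step2 : ∀ j : ℕ, T (2 * j) =
        (2 : ℝ) ^ m / 2 ^ (∑ k : Fin m, a k.succ) *
          Ssum (List.ofFn fun k : Fin m => (a k.succ, b k.succ ^ 2)) j := by
      intro j
      rw [hT]
      exact hIH j
    -- RHS
    rw [show (List.ofFn fun i : Fin (m+1) => (a i, b i ^ 2)) =
        (a 0, b 0 ^ 2) :: List.ofFn (fun k : Fin m => (a k.succ, b k.succ ^ 2)) from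
      List.ofFn_succ]
    rw [show Ssum ((a 0, b 0 ^ 2) :: List.ofFn (fun k : Fin m => (a k.succ, b k.succ ^ 2))) n
        = ∑ j ∈ Finset.Icc 1 n, (b 0 ^ 2) ^ j / (j : ℝ) ^ a 0 *
            Ssum (List.ofFn fun k : Fin m => (a k.succ, b k.succ ^ 2)) j from rfl]
    rw [Fin.sum_univ_succ, Finset.mul_sum]
    refine Finset.sum_congr rfl fun j hj => ?_
    rw [step2 j]
    have heven : (b 0 ^ (2 * j) + (-b 0) ^ (2 * j)) = 2 * (b 0 ^ 2) ^ j := by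
      rw [(even_two_mul j).neg_pow, ← pow_mul]
      ring
    rw [heven]
    have hcast : ((2 * j : ℕ) : ℝ) ^ a 0 = 2 ^ a 0 * (j : ℝ) ^ a 0 := by
      push_cast
      rw [mul_pow]
    rw [hcast, pow_add, pow_succ]
    field_simp
    ring

/-- Duplication relation for `S`-sums: for positive integer weights `a_i`, positive
reals `b_i` and `n ≥ 1`, the sum over all `2^m` sign choices satisfies
`Σ_{±} S_{a_m,…,a_1}(±b_m,…,±b_1;2n) = 2^{m − Σ a_i} · S_{a_m,…,a_1}(b_m²,…,b_1²;n)`. -/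
theorem ssum_duplication (m : ℕ) (hm : 1 ≤ m) (a : Fin m → ℕ) (b : Fin m → ℝ)
    (ha : ∀ i, 1 ≤ a i) (hb : ∀ i, 0 < b i) (n : ℕ) (hn : 1 ≤ n) :
    (∑ s : Fin m → Bool,
        Ssum (List.ofFn fun i => (a i, if s i then b i else -b i)) (2 * n)) =
      (1 / (2 : ℝ) ^ ((∑ i, a i) - m)) * Ssum (List.ofFn fun i => (a i, b i ^ 2)) n := by
  rw [aux_dup m a b ha n]
  congr 1
  have hge : m ≤ ∑ i, a i := by
    calc m = ∑ _i : Fin m, 1 := by simp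
    _ ≤ ∑ i, a i := Finset.sum_le_sum fun i _ => ha i
  rw [eq_div_iff (by positivity), div_mul_eq_mul_div]
  rw [← pow_add, div_eq_one_iff_eq (by positivity)]
  congr 1
  omega
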